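/- arXiv:2312.07092 — 2 statements merged into one kernel-verified Lean document; each statement's English description precedes it below -/
import Mathlib

section
/- For every nonempty set V ⊆ ℤ, every q ∈ (2,4) and every μ > 0, the set {E_{q,V}(u) : u ∈ H¹_μ(ℝ)} is bounded from below; that is, 𝓔_{q,V}(μ) > −∞. -/
open MeasureTheory

/-- `u` is (the continuous representative of) an `H¹(ℝ)` function with weak
derivative `u'`: both `u` and `u'` are square-integrable and `u` is a
primitive of `u'`. -/
def InH1 (u u' : ℝ → ℝ) : Prop :=
  Integrable (fun x => (u x) ^ 2) ∧ Integrable (fun x => (u' x) ^ 2) ∧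
    ∀ a b : ℝ, u b - u a = ∫ x in a..b, u' x

/-- The mass `∫_ℝ u²`. -/
noncomputable def mass (u : ℝ → ℝ) : ℝ := ∫ x : ℝ, (u x) ^ 2

/-- The energy `E_{q,V}(u) = (1/2)∫ |u'|² − (1/q)∑_{v ∈ V} |u(v)|^q`,
for a set of vertices `V ⊆ ℤ`. -/
noncomputable def energy (q : ℝ) (V : Set ℤ) (u u' : ℝ → ℝ) : ℝ :=
  (1 / 2) * (∫ x : ℝ, (u' x) ^ 2) - (1 / q) * ∑' v : V, |u ((v : ℤ) : ℝ)| ^ q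

/-- The set of energies of `H¹` functions of mass `μ`;
its infimum is the ground-state level `𝓔_{q,V}(μ)`. -/
def levelSet (q : ℝ) (V : Set ℤ) (μ : ℝ) : Set ℝ :=
  {E | ∃ u u' : ℝ → ℝ, InH1 u u' ∧ mass u = μ ∧ E = energy q V u u'}

lemma absIntegrableOn {f : ℝ → ℝ} (hf2 : Integrable (fun x => (f x) ^ 2))
    {s : Set ℝ} (hfin : volume s ≠ ⊤) :
    IntegrableOn (fun x => |f x|) s := by
  have hasm : AEStronglyMeasurable (fun x => |f x|) (volume.restrict s) := by
    have : AEStronglyMeasurable (fun x => (f x) ^ 2) (volume.restrict s) :=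
      (hf2.aestronglyMeasurable).restrict
    have h := Real.continuous_sqrt.comp_aestronglyMeasurable this
    refine h.congr ?_
    filter_upwards with x
    simp [Real.sqrt_sq_eq_abs]
  have hconst : IntegrableOn (fun _ : ℝ => (1:ℝ)) s := integrableOn_const hfin
  have hg : IntegrableOn (fun x => (1 + (f x)^2)/2) s := by
    have := (hconst.add hf2.integrableOn).div_const 2
    simpa [IntegrableOn] using this
  refine hg.mono' hasm ?_
  filter_upwards with x
  rw [Real.norm_eq_abs, abs_abs]
  nlinarith [sq_nonneg (|f x| - 1), sq_abs (f x)]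

lemma csLemma {f : ℝ → ℝ} (hf2 : Integrable (fun x => (f x) ^ 2))
    {s : Set ℝ} (hs : MeasurableSet s) (hfin : volume s ≠ ⊤) :
    (∫ x in s, |f x|) ^ 2 ≤ (volume s).toReal * ∫ x in s, (f x) ^ 2 := by
  set A := ∫ x in s, |f x| with hA
  set B := ∫ x in s, (f x) ^ 2 with hB
  set L := (volume s).toReal with hL
  have hA0 : 0 ≤ A := setIntegral_nonneg hs (fun x _ => abs_nonneg _)
  have hB0 : 0 ≤ B := setIntegral_nonneg hs (fun x _ => sq_nonneg _)
  have hL0 : 0 ≤ L := ENNReal.toReal_nonneg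
  have hai : IntegrableOn (fun x => |f x|) s := absIntegrableOn hf2 hfin
  have hconst : IntegrableOn (fun _ : ℝ => (1:ℝ)) s := integrableOn_const hfin
  have key : ∀ t : ℝ, 0 ≤ t^2 * B - 2 * t * A + L := by
    intro t
    have h1 : 0 ≤ ∫ x in s, (t * |f x| - 1)^2 :=
      setIntegral_nonneg hs (fun x _ => sq_nonneg _)
    have hI1 : IntegrableOn (fun x => t^2*(f x)^2 - 2*t*|f x|) s := by
      exact (hf2.integrableOn.const_mul _).sub (hai.const_mul _)
    have h2 : ∫ x in s, (t * |f x| - 1)^2 = t^2 * B - 2 * t * A + L := by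
      have e : (fun x => (t * |f x| - 1)^2) = (fun x => (t^2 * (f x)^2 - 2*t*|f x|) + 1) := by
        funext x; nlinarith [sq_abs (f x)]
      rw [e, integral_add hI1 hconst,
        integral_sub (hf2.integrableOn.const_mul _) (hai.const_mul _),
        integral_const_mul, integral_const_mul]
      simp [hA, hB, hL, measureReal_def]
    linarith [h1.trans_eq h2]
  rcases eq_or_lt_of_le hB0 with hBe | hBp
  · have hA0' : A = 0 := by
      by_contra hne
      have hApos : 0 < A := lt_of_le_of_ne hA0 (Ne.symm hne)
      have h := key ((L + 1) / (2 * A))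
      rw [← hBe] at h
      have e : 2 * ((L+1)/(2*A)) * A = L + 1 := by field_simp
      nlinarith
    rw [hA0']
    simpa using mul_nonneg hL0 hB0
  · have hB' : B ≠ 0 := ne_of_gt hBp
    have hr : A / B * B = A := div_mul_cancel₀ A hB'
    have k := key (A/B)
    nlinarith [k, hBp, sq_nonneg (A/B), mul_pos hBp hBp]


lemma vertexBound {u u' : ℝ → ℝ} (hu2 : Integrable (fun x => (u x) ^ 2))
    (hu'2 : Integrable (fun x => (u' x) ^ 2))
    (hftc : ∀ a b : ℝ, u b - u a = ∫ x in a..b, u' x)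
    {L : ℝ} (hL : 0 < L) (v : ℝ) :
    (u v)^2 ≤ (2/L) * (∫ x in Set.Ioc v (v+L), (u x)^2)
      + 2*L*(∫ x in Set.Ioc v (v+L), (u' x)^2) := by
  set I := Set.Ioc v (v+L) with hI
  have hmeas : MeasurableSet I := measurableSet_Ioc
  have hvol : volume I = ENNReal.ofReal L := by rw [hI, Real.volume_Ioc]; ring_nf
  have hfin : volume I ≠ ⊤ := by rw [hvol]; exact ENNReal.ofReal_ne_top
  have hvolR : (volume I).toReal = L := by rw [hvol, ENNReal.toReal_ofReal hL.le]
  set KI := ∫ x in I, (u' x)^2 with hKI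
  set mI := ∫ x in I, (u x)^2 with hmI
  set cI := ∫ x in I, |u' x| with hcI
  have hKI0 : 0 ≤ KI := setIntegral_nonneg hmeas (fun x _ => sq_nonneg _)
  have hcs : cI^2 ≤ L * KI := by
    have := csLemma hu'2 hmeas hfin
    rwa [hvolR] at this
  have hai : IntegrableOn (fun x => |u' x|) I := absIntegrableOn hu'2 hfin
  have stepA : ∀ x ∈ I, (u v)^2 ≤ 2*(u x)^2 + 2*L*KI := by
    intro x hx
    have hvx : v ≤ x := le_of_lt hx.1
    have h1 : |u v - u x| ≤ cI := by
      rw [hftc x v, intervalIntegral.integral_symm v x, abs_neg,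
        intervalIntegral.integral_of_le hvx]
      calc |∫ t in Set.Ioc v x, u' t| ≤ ∫ t in Set.Ioc v x, |u' t| := by
            simpa [Real.norm_eq_abs] using norm_integral_le_integral_norm
              (f := u') (μ := volume.restrict (Set.Ioc v x))
        _ ≤ cI := by
            apply setIntegral_mono_set hai
            · filter_upwards with y using abs_nonneg _
            · exact HasSubset.Subset.eventuallyLE (Set.Ioc_subset_Ioc le_rfl hx.2)
    have h2 : |u v| ≤ |u x| + cI := by
      calc |u v| ≤ |u x| + |u v - u x| := by
            have := abs_add_le (u x) (u v - u x); simpa [add_sub_cancel] using this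
        _ ≤ |u x| + cI := by linarith
    nlinarith [sq_abs (u v), sq_abs (u x), abs_nonneg (u x), abs_nonneg (u v),
      sq_nonneg (|u x| - cI), mul_le_mul_of_nonneg_left hcs (by norm_num : (0:ℝ) ≤ 2)]
  have hIconst : IntegrableOn (fun _ : ℝ => 2*L*KI) I :=
    integrableOn_const hfin
  have hRHSint : IntegrableOn (fun x => 2*(u x)^2 + 2*L*KI) I :=
    (hu2.integrableOn.const_mul 2).add hIconst
  have hint : ∫ _x in I, (u v)^2 ≤ ∫ x in I, (2*(u x)^2 + 2*L*KI) :=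
    setIntegral_mono_on (integrableOn_const hfin) hRHSint hmeas stepA
  rw [setIntegral_const, measureReal_def, hvolR, smul_eq_mul] at hint
  have hrhs : ∫ x in I, (2*(u x)^2 + 2*L*KI) = 2 * mI + L * (2*L*KI) := by
    rw [integral_add (hu2.integrableOn.const_mul 2) hIconst, integral_const_mul,
      setIntegral_const, measureReal_def, hvolR, smul_eq_mul]
  rw [hrhs] at hint
  have : (u v)^2 ≤ (2 * mI + 2*L^2*KI) / L := by
    rw [le_div_iff₀ hL]
    nlinarith [hint]
  calc (u v)^2 ≤ (2 * mI + 2*L^2*KI) / L := this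
    _ = (2/L) * mI + 2*L*KI := by field_simp

lemma finsum_setIntegral_le {f : ℝ → ℝ} (hf : Integrable f) (hf0 : ∀ x, 0 ≤ f x)
    {ι : Type*} (F : Finset ι) (t : ι → Set ℝ) (hm : ∀ i, MeasurableSet (t i))
    (hd : (↑F : Set ι).Pairwise (Function.onFun Disjoint t)) :
    ∑ i ∈ F, ∫ x in t i, f x ≤ ∫ x, f x := by
  rw [← integral_biUnion_finset F (fun i _ => hm i) hd (fun i _ => hf.integrableOn)]
  exact setIntegral_le_integral hf (Filter.Eventually.of_forall hf0)

lemma iocDisjoint {L : ℝ} (hL1 : L ≤ 1) {v w : ℤ} (hvw : v ≠ w) :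
    Disjoint (Set.Ioc (v:ℝ) (v+L)) (Set.Ioc (w:ℝ) (w+L)) := by
  rw [Set.Ioc_disjoint_Ioc]
  rcases lt_or_gt_of_ne hvw with h | h
  · have : (v:ℝ) + 1 ≤ w := by exact_mod_cast Int.add_one_le_iff.2 h
    calc ((v:ℝ)+L) ⊓ ((w:ℝ)+L) ≤ (v:ℝ)+L := inf_le_left
      _ ≤ (w:ℝ) := by linarith
      _ ≤ (v:ℝ) ⊔ (w:ℝ) := le_sup_right
  · have : (w:ℝ) + 1 ≤ v := by exact_mod_cast Int.add_one_le_iff.2 h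
    calc ((v:ℝ)+L) ⊓ ((w:ℝ)+L) ≤ (w:ℝ)+L := inf_le_right
      _ ≤ (v:ℝ) := by linarith
      _ ≤ (v:ℝ) ⊔ (w:ℝ) := le_sup_left

lemma tsumBound (V : Set ℤ) {u u' : ℝ → ℝ} (hu2 : Integrable (fun x => (u x) ^ 2))
    (hu'2 : Integrable (fun x => (u' x) ^ 2))
    (hftc : ∀ a b : ℝ, u b - u a = ∫ x in a..b, u' x)
    {q L : ℝ} (hq : 2 < q) (hL : 0 < L) (hL1 : L ≤ 1) :
    ∑' v : V, |u ((v : ℤ) : ℝ)| ^ q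
      ≤ Real.sqrt ((2/L) * (∫ x, (u x)^2) + 2*L*(∫ x, (u' x)^2)) ^ (q-2)
        * ((2/L) * (∫ x, (u x)^2) + 2*L*(∫ x, (u' x)^2)) := by
  set μ := ∫ x, (u x)^2 with hμdef
  set K := ∫ x, (u' x)^2 with hKdef
  set M := (2/L) * μ + 2*L*K with hMdef
  have hμ0 : 0 ≤ μ := integral_nonneg (fun x => sq_nonneg _)
  have hK0 : 0 ≤ K := integral_nonneg (fun x => sq_nonneg _)
  have hM0 : 0 ≤ M := by positivity
  have hC0 : 0 ≤ Real.sqrt M ^ (q-2) * M :=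
    mul_nonneg (Real.rpow_nonneg (Real.sqrt_nonneg _) _) hM0
  -- per-vertex bound
  have hver : ∀ v : ℝ, |u v| ^ q ≤ Real.sqrt M ^ (q-2) *
      ((2/L) * (∫ x in Set.Ioc v (v+L), (u x)^2)
        + 2*L*(∫ x in Set.Ioc v (v+L), (u' x)^2)) := by
    intro v
    set mv := ∫ x in Set.Ioc v (v+L), (u x)^2 with hmv
    set Kv := ∫ x in Set.Ioc v (v+L), (u' x)^2 with hKv
    have hvb : (u v)^2 ≤ (2/L) * mv + 2*L*Kv := vertexBound hu2 hu'2 hftc hL v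
    have hmvle : mv ≤ μ := setIntegral_le_integral hu2
      (Filter.Eventually.of_forall (fun x => sq_nonneg _))
    have hKvle : Kv ≤ K := setIntegral_le_integral hu'2
      (Filter.Eventually.of_forall (fun x => sq_nonneg _))
    have hrhs0 : 0 ≤ (2/L) * mv + 2*L*Kv := le_trans (sq_nonneg _) hvb
    have hMv : (u v)^2 ≤ M := by
      refine hvb.trans ?_
      rw [hMdef]
      have h1 : (2/L) * mv ≤ (2/L) * μ := by
        apply mul_le_mul_of_nonneg_left hmvle; positivity
      have h2 : 2*L*Kv ≤ 2*L*K := by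
        apply mul_le_mul_of_nonneg_left hKvle; positivity
      linarith
    rcases eq_or_ne (u v) 0 with h0 | h0
    · rw [h0, abs_zero, Real.zero_rpow (by linarith : q ≠ 0)]
      exact mul_nonneg (Real.rpow_nonneg (Real.sqrt_nonneg _) _) hrhs0
    · have habs : 0 < |u v| := abs_pos.2 h0
      have hsplit : |u v| ^ q = |u v| ^ (q-2) * (u v)^2 := by
        rw [← sq_abs (u v), ← Real.rpow_natCast |u v| 2, ← Real.rpow_add habs]
        norm_num
      have hle : |u v| ^ (q-2) ≤ Real.sqrt M ^ (q-2) := by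
        apply Real.rpow_le_rpow (abs_nonneg _) _ (by linarith)
        rw [Real.le_sqrt (abs_nonneg _) hM0]
        rwa [sq_abs]
      rw [hsplit]
      calc |u v| ^ (q-2) * (u v)^2 ≤ Real.sqrt M ^ (q-2) * (u v)^2 :=
            mul_le_mul_of_nonneg_right hle (sq_nonneg _)
        _ ≤ _ := mul_le_mul_of_nonneg_left hvb
            (Real.rpow_nonneg (Real.sqrt_nonneg _) _)
  -- sum over finite subsets
  have hsum : ∀ F : Finset V, ∑ v ∈ F, |u ((v : ℤ) : ℝ)| ^ q ≤ Real.sqrt M ^ (q-2) * M := by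
    intro F
    have hdisj : (↑F : Set V).Pairwise
        (Function.onFun Disjoint fun v : V => Set.Ioc ((v:ℤ):ℝ) (((v:ℤ):ℝ)+L)) := by
      intro a _ b _ hab
      exact iocDisjoint hL1 (fun h => hab (Subtype.ext h))
    have hm1 : ∑ v ∈ F, ∫ x in Set.Ioc ((v:ℤ):ℝ) (((v:ℤ):ℝ)+L), (u x)^2 ≤ μ :=
      finsum_setIntegral_le hu2 (fun x => sq_nonneg _) F _
        (fun i => measurableSet_Ioc) hdisj
    have hm2 : ∑ v ∈ F, ∫ x in Set.Ioc ((v:ℤ):ℝ) (((v:ℤ):ℝ)+L), (u' x)^2 ≤ K :=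
      finsum_setIntegral_le hu'2 (fun x => sq_nonneg _) F _
        (fun i => measurableSet_Ioc) hdisj
    calc ∑ v ∈ F, |u ((v : ℤ) : ℝ)| ^ q
        ≤ ∑ v ∈ F, Real.sqrt M ^ (q-2) *
            ((2/L) * (∫ x in Set.Ioc ((v:ℤ):ℝ) (((v:ℤ):ℝ)+L), (u x)^2)
              + 2*L*(∫ x in Set.Ioc ((v:ℤ):ℝ) (((v:ℤ):ℝ)+L), (u' x)^2)) :=
          Finset.sum_le_sum (fun v _ => hver _)
      _ = Real.sqrt M ^ (q-2) *
            ∑ v ∈ F, ((2/L) * (∫ x in Set.Ioc ((v:ℤ):ℝ) (((v:ℤ):ℝ)+L), (u x)^2)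
              + 2*L*(∫ x in Set.Ioc ((v:ℤ):ℝ) (((v:ℤ):ℝ)+L), (u' x)^2)) :=
          (Finset.mul_sum _ _ _).symm
      _ ≤ Real.sqrt M ^ (q-2) * M := by
          refine mul_le_mul_of_nonneg_left ?_ (Real.rpow_nonneg (Real.sqrt_nonneg _) _)
          rw [Finset.sum_add_distrib, ← Finset.mul_sum, ← Finset.mul_sum, hMdef]
          have h1 : (2/L) * (∑ v ∈ F, ∫ x in Set.Ioc ((v:ℤ):ℝ) (((v:ℤ):ℝ)+L), (u x)^2)
              ≤ (2/L) * μ := mul_le_mul_of_nonneg_left hm1 (by positivity)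
          have h2 : 2*L*(∑ v ∈ F, ∫ x in Set.Ioc ((v:ℤ):ℝ) (((v:ℤ):ℝ)+L), (u' x)^2)
              ≤ 2*L*K := mul_le_mul_of_nonneg_left hm2 (by positivity)
          linarith
  by_cases hS : Summable (fun v : V => |u ((v : ℤ) : ℝ)| ^ q)
  · exact hS.tsum_le_of_sum_le hsum
  · rw [tsum_eq_zero_of_not_summable hS]
    exact hC0

lemma calcLemma (D : ℝ) (hD : 0 ≤ D) {a : ℝ} (ha0 : 0 < a) (ha1 : a < 1) :
    ∃ b : ℝ, ∀ y : ℝ, 1 ≤ y → b ≤ (y - 1)/2 - D * y ^ a := by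
  set T := max 1 ((2*D) ^ (1/(1-a))) with hT
  refine ⟨-1/2 - D * T ^ a, ?_⟩
  intro y hy
  have hT1 : (1:ℝ) ≤ T := le_max_left _ _
  have hTa0 : 0 ≤ D * T ^ a :=
    mul_nonneg hD (Real.rpow_nonneg (by linarith) _)
  rcases le_total y T with hyT | hTy
  · have h := mul_le_mul_of_nonneg_left
      (Real.rpow_le_rpow (by linarith : (0:ℝ) ≤ y) hyT ha0.le) hD
    linarith
  · have hyp : (0:ℝ) < y := lt_of_lt_of_le one_pos hy
    have h2D : 2*D ≤ y ^ (1-a) := by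
      have h1 : ((2*D) ^ (1/(1-a))) ^ (1-a) = 2*D := by
        rw [← Real.rpow_mul (by linarith : (0:ℝ) ≤ 2*D)]
        rw [one_div_mul_cancel (ne_of_gt (by linarith : (0:ℝ) < 1-a))]
        exact Real.rpow_one _
      calc 2*D = ((2*D)^(1/(1-a)))^(1-a) := h1.symm
        _ ≤ T ^ (1-a) := Real.rpow_le_rpow (Real.rpow_nonneg (by linarith) _)
            (le_max_right _ _) (by linarith)
        _ ≤ y ^ (1-a) := Real.rpow_le_rpow (by linarith) hTy (by linarith)
    have hysplit : y ^ a * y ^ (1-a) = y := by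
      rw [← Real.rpow_add hyp, show a + (1-a) = 1 by ring, Real.rpow_one]
    have hDya : 2 * (D * y^a) ≤ y := by
      calc 2*(D*y^a) = y^a * (2*D) := by ring
        _ ≤ y^a * y^(1-a) := mul_le_mul_of_nonneg_left h2D (Real.rpow_nonneg hyp.le _)
        _ = y := hysplit
    linarith

/-- For every nonempty `V ⊆ ℤ`, `q ∈ (2,4)`, `μ > 0`, the set of energies of
mass-`μ` functions is bounded below, i.e. `𝓔_{q,V}(μ) > -∞`. -/
theorem stmt1 (V : Set ℤ) (hV : V.Nonempty) (q μ : ℝ) (hq : 2 < q) (hq' : q < 4)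
    (hμ : 0 < μ) : BddBelow (levelSet q V μ) := by
  have hq0 : (0:ℝ) < q := by linarith
  set c : ℝ := 2*μ + 2 with hc
  have hc0 : 0 < c := by linarith
  set D : ℝ := c ^ (q/2) / q with hD
  have hD0 : 0 ≤ D := div_nonneg (Real.rpow_nonneg hc0.le _) hq0.le
  obtain ⟨b, hb⟩ := calcLemma D hD0 (a := q/4) (by linarith) (by linarith)
  refine ⟨b, ?_⟩
  rintro E ⟨u, u', ⟨hu2, hu'2, hftc⟩, hmass, rfl⟩
  set K : ℝ := ∫ x, (u' x)^2 with hK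
  have hK0 : 0 ≤ K := integral_nonneg (fun x => sq_nonneg _)
  set y : ℝ := Real.sqrt (1+K) with hy
  have hy1 : (1:ℝ) ≤ y :=
    (Real.le_sqrt zero_le_one (by linarith)).2 (by nlinarith)
  have hy0 : (0:ℝ) < y := lt_of_lt_of_le one_pos hy1
  have hysq : y^2 = 1 + K := Real.sq_sqrt (by linarith)
  set L : ℝ := y⁻¹ with hL
  have hLpos : 0 < L := inv_pos.2 hy0
  have hL1 : L ≤ 1 := by
    rw [hL]
    exact inv_le_one_of_one_le₀ hy1
  have hmass' : (∫ x, (u x)^2) = μ := hmass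
  have hts := tsumBound V hu2 hu'2 hftc hq hLpos hL1
  rw [hmass'] at hts
  set M : ℝ := (2/L) * μ + 2*L*K with hM
  have hM0 : 0 ≤ M := by positivity
  have hMle : M ≤ c * y := by
    have h1 : (2/L) * μ = 2 * y * μ := by
      rw [hL]; field_simp
    have h2' : y⁻¹ * K ≤ y := by
      rw [inv_mul_le_iff₀ hy0]
      nlinarith [hysq]
    have h2 : 2*L*K ≤ 2*y := by
      calc 2*L*K = 2*(y⁻¹*K) := by rw [hL]; ring
        _ ≤ 2*y := by linarith
    rw [hM, hc, h1]
    linarith [h2]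
  have hcy0 : (0:ℝ) < c * y := mul_pos hc0 hy0
  have hmono : Real.sqrt M ^ (q-2) * M ≤ Real.sqrt (c*y) ^ (q-2) * (c*y) := by
    have hs : Real.sqrt M ≤ Real.sqrt (c*y) := Real.sqrt_le_sqrt hMle
    have h1 : Real.sqrt M ^ (q-2) ≤ Real.sqrt (c*y) ^ (q-2) :=
      Real.rpow_le_rpow (Real.sqrt_nonneg _) hs (by linarith)
    calc Real.sqrt M ^ (q-2) * M ≤ Real.sqrt (c*y) ^ (q-2) * M :=
          mul_le_mul_of_nonneg_right h1 hM0
      _ ≤ Real.sqrt (c*y) ^ (q-2) * (c*y) :=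
          mul_le_mul_of_nonneg_left hMle (Real.rpow_nonneg (Real.sqrt_nonneg _) _)
  have e1 : Real.sqrt (c*y) ^ (q-2) = (c*y) ^ ((q-2)/2) := by
    rw [Real.sqrt_eq_rpow, ← Real.rpow_mul hcy0.le]
    congr 1
    ring
  have e2 : (c*y) ^ ((q-2)/2) * (c*y) = (c*y) ^ (q/2) := by
    rw [show q/2 = (q-2)/2 + 1 by ring, Real.rpow_add hcy0, Real.rpow_one]
  have e3 : (c*y) ^ (q/2) = c ^ (q/2) * y ^ (q/2) := Real.mul_rpow hc0.le hy0.le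
  have e4 : y ^ (q/2) = (1+K) ^ (q/4) := by
    rw [hy, Real.sqrt_eq_rpow, ← Real.rpow_mul (by linarith : (0:ℝ) ≤ 1+K)]
    congr 1
    ring
  have hform : Real.sqrt (c*y) ^ (q-2) * (c*y) = c ^ (q/2) * (1+K) ^ (q/4) := by
    rw [e1, e2, e3, e4]
  have hSle : (∑' v : V, |u ((v : ℤ) : ℝ)| ^ q) ≤ c ^ (q/2) * (1+K) ^ (q/4) :=
    hts.trans (hmono.trans_eq hform)
  have hen : energy q V u u' = (1/2)*K - (1/q)*(∑' v : V, |u ((v : ℤ) : ℝ)| ^ q) := by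
    rw [energy, ← hK]
  have hq_inv : (0:ℝ) ≤ 1/q := by positivity
  have hmul : (1/q)*(∑' v : V, |u ((v : ℤ) : ℝ)| ^ q) ≤ (1/q)*(c ^ (q/2) * (1+K) ^ (q/4)) :=
    mul_le_mul_of_nonneg_left hSle hq_inv
  have hDrw : (1/q)*(c ^ (q/2) * (1+K) ^ (q/4)) = D * (1+K) ^ (q/4) := by
    rw [hD]; ring
  have hbK := hb (1+K) (by linarith)
  rw [hen]
  rw [hDrw] at hmul
  linarith
end

section
/- Let V = {m ∈ ℤ : m ≠ n(n+1) for every n ∈ ℕ}, q ∈ (2,4) and μ > 0. For every u ∈ H¹_μ(ℝ) with u(x) > 0 for all x ∈ ℝ, there exists w ∈ H¹_μ(ℝ) with ∫_ℝ |w'(x)|² dx = ∫_ℝ |u'(x)|² dx and ∑_{v∈V} |w(v)|^q > ∑_{v∈V} |u(v)|^q; in particular E_{q,V}(w) < E_{q,V}(u). -/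
open MeasureTheory

/-- The set of integers that are not of the form `n(n+1)`, `n ∈ ℕ`. -/
def Vgap : Set ℤ := {m | ∀ n : ℕ, m ≠ (n : ℤ) * (n + 1)}

lemma aux_union : (⋃ m : ℤ, Set.Ioc (m : ℝ) ((m : ℝ) + 1)) = Set.univ := by
  ext x
  simp only [Set.mem_iUnion, Set.mem_univ, iff_true, Set.mem_Ioc]
  refine ⟨⌈x⌉ - 1, ?_, ?_⟩
  · push_cast; linarith [Int.ceil_lt_add_one x]
  · push_cast; linarith [Int.le_ceil x]

lemma aux_disj : Pairwise (Function.onFun Disjoint (fun m : ℤ => Set.Ioc (m : ℝ) ((m : ℝ) + 1))) := by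
  intro m n hmn
  refine Set.disjoint_left.mpr fun x hx hx' => hmn ?_
  have h1 : (m : ℝ) < x := hx.1
  have h2 : x ≤ (m : ℝ) + 1 := hx.2
  have h3 : (n : ℝ) < x := hx'.1
  have h4 : x ≤ (n : ℝ) + 1 := hx'.2
  have hmn1 : (m : ℝ) < n + 1 := lt_of_lt_of_le h1 h4
  have hnm1 : (n : ℝ) < m + 1 := lt_of_lt_of_le h3 h2
  have e1 : m < n + 1 := by exact_mod_cast hmn1
  have e2 : n < m + 1 := by exact_mod_cast hnm1
  omega

lemma summable_interval_integrals (f : ℝ → ℝ) (hf : Integrable f) :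
    Summable (fun m : ℤ => ∫ x in Set.Ioc (m : ℝ) ((m : ℝ) + 1), f x) := by
  have h := hasSum_integral_iUnion (μ := volume) (f := f)
    (s := fun m : ℤ => Set.Ioc (m : ℝ) ((m : ℝ) + 1))
    (fun _ => measurableSet_Ioc) aux_disj (by rw [aux_union]; exact hf.integrableOn)
  exact h.summable

lemma abs_le_half_add (x ε : ℝ) (hε : 0 < ε) : |x| ≤ ε/2 + x^2/(2*ε) := by
  rw [div_add_div _ _ two_ne_zero (by positivity), le_div_iff₀ (by positivity)]
  nlinarith [sq_nonneg (|x| - ε), sq_abs x]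

lemma summable_sq_of_InH1 (u u' : ℝ → ℝ)
    (h1 : Integrable (fun x => (u x) ^ 2)) (h2 : Integrable (fun x => (u' x) ^ 2))
    (hftc : ∀ a b : ℝ, u b - u a = ∫ x in a..b, u' x) :
    Summable (fun m : ℤ => (u (m : ℝ)) ^ 2) := by
  set A : ℤ → ℝ := fun m => ∫ x in Set.Ioc (m : ℝ) ((m : ℝ) + 1), (u x) ^ 2 with hA_def
  set B : ℤ → ℝ := fun m => ∫ x in Set.Ioc (m : ℝ) ((m : ℝ) + 1), (u' x) ^ 2 with hB_def
  have hA : Summable A := summable_interval_integrals _ h1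
  have hB : Summable B := summable_interval_integrals _ h2
  have habs : AEStronglyMeasurable (fun x => |u' x|) volume := by
    have := Real.continuous_sqrt.comp_aestronglyMeasurable h2.aestronglyMeasurable
    simpa [Real.sqrt_sq_eq_abs] using this
  have key : ∀ m : ℤ, (u (m : ℝ)) ^ 2 ≤ 2 * A m + 2 * B m := by
    intro m
    have hB0 : 0 ≤ B m := setIntegral_nonneg measurableSet_Ioc (fun x _ => sq_nonneg _)
    have hconst : ∀ r : ℝ, IntegrableOn (fun _ : ℝ => r) (Set.Ioc (m : ℝ) ((m : ℝ) + 1)) :=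
      fun r => (integrableOn_const_iff).mpr (Or.inr measure_Ioc_lt_top)
    have habs_int : IntegrableOn (fun t => |u' t|) (Set.Ioc (m : ℝ) ((m : ℝ) + 1)) := by
      have hg : IntegrableOn (fun t => (1 + (u' t) ^ 2) / 2) (Set.Ioc (m : ℝ) ((m : ℝ) + 1)) :=
        ((hconst 1).add h2.integrableOn).div_const 2
      refine hg.mono' habs.restrict ?_
      refine Filter.Eventually.of_forall fun t => ?_
      rw [Real.norm_eq_abs, abs_abs]
      nlinarith [sq_nonneg (|u' t| - 1), sq_abs (u' t)]
    set J : ℝ := ∫ t in Set.Ioc (m : ℝ) ((m : ℝ) + 1), |u' t| with hJ_def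
    have hJ0 : 0 ≤ J := setIntegral_nonneg measurableSet_Ioc (fun x _ => abs_nonneg _)
    have hvol : (volume (Set.Ioc (m : ℝ) ((m : ℝ) + 1))).toReal = 1 := by
      rw [Real.volume_Ioc]; simp
    have hJsq : J ^ 2 ≤ B m := by
      rcases hJ0.eq_or_lt with h0 | hJpos
      · rw [← h0]; simpa using hB0
      · have hint2 : IntegrableOn (fun t => J / 2 + (u' t) ^ 2 / (2 * J))
            (Set.Ioc (m : ℝ) ((m : ℝ) + 1)) :=
          (hconst _).add (h2.integrableOn.div_const _)
        have hmono := setIntegral_mono_on habs_int hint2 measurableSet_Ioc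
          (fun t _ => abs_le_half_add (u' t) J hJpos)
        rw [integral_add (hconst _) (h2.integrableOn.div_const _), setIntegral_const,
          integral_div, measureReal_def, hvol, one_smul] at hmono
        have h' : J / 2 ≤ B m / (2 * J) := by
          have : (∫ t in Set.Ioc (m : ℝ) ((m : ℝ) + 1), (u' t) ^ 2) = B m := rfl
          rw [this] at hmono; linarith
        rw [div_le_div_iff₀ two_pos (by positivity)] at h'
        nlinarith [h']
    have hsqrt : J ≤ Real.sqrt (B m) := by
      have := Real.sqrt_le_sqrt hJsq
      rwa [Real.sqrt_sq hJ0] at this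
    have hptx : ∀ x ∈ Set.Ioc (m : ℝ) ((m : ℝ) + 1),
        (u (m : ℝ)) ^ 2 ≤ 2 * (u x) ^ 2 + 2 * B m := by
      intro x hx
      have hdiff : |u (m : ℝ) - u x| ≤ Real.sqrt (B m) := by
        rw [hftc x (m : ℝ)]
        by_cases hii : IntervalIntegrable u' volume x (m : ℝ)
        · have hn := intervalIntegral.norm_integral_le_integral_norm_uIoc
            (f := u') (a := x) (b := (m : ℝ)) (μ := volume)
          simp only [Real.norm_eq_abs] at hn
          have hsub : Set.uIoc x (m : ℝ) ⊆ Set.Ioc (m : ℝ) ((m : ℝ) + 1) := by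
            rw [Set.uIoc_comm, Set.uIoc_of_le (le_of_lt hx.1)]
            exact Set.Ioc_subset_Ioc_right hx.2
          have hmono3 : (∫ t in Set.uIoc x (m : ℝ), |u' t|) ≤ J :=
            setIntegral_mono_set habs_int (ae_of_all _ fun t => abs_nonneg _)
              (HasSubset.Subset.eventuallyLE hsub)
          calc |∫ t in x..(m : ℝ), u' t| ≤ ∫ t in Set.uIoc x (m : ℝ), |u' t| := hn
            _ ≤ J := hmono3
            _ ≤ Real.sqrt (B m) := hsqrt
        · rw [intervalIntegral.integral_undef hii]
          simpa using Real.sqrt_nonneg (B m)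
      have htri : |u (m : ℝ)| - |u x| ≤ |u (m : ℝ) - u x| := abs_sub_abs_le_abs_sub _ _
      have hsq : Real.sqrt (B m) ^ 2 = B m := Real.sq_sqrt hB0
      have hle : |u (m : ℝ)| ≤ |u x| + Real.sqrt (B m) := by linarith
      nlinarith [mul_self_le_mul_self (abs_nonneg (u (m : ℝ))) hle, sq_abs (u (m : ℝ)),
        sq_abs (u x), sq_nonneg (|u x| - Real.sqrt (B m)), abs_nonneg (u x),
        Real.sqrt_nonneg (B m)]
    have hint_rhs : IntegrableOn (fun x => 2 * (u x) ^ 2 + 2 * B m)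
        (Set.Ioc (m : ℝ) ((m : ℝ) + 1)) :=
      (h1.integrableOn.const_mul 2).add (hconst _)
    have hmono2 := setIntegral_mono_on (hconst ((u (m : ℝ)) ^ 2)) hint_rhs
      measurableSet_Ioc hptx
    rw [setIntegral_const, integral_add (h1.integrableOn.const_mul 2) (hconst _),
      MeasureTheory.integral_const_mul, setIntegral_const, measureReal_def, hvol, one_smul, one_smul] at hmono2
    exact hmono2
  exact Summable.of_nonneg_of_le (fun m => sq_nonneg _) key ((hA.mul_left 2).add (hB.mul_left 2))

/-- For `V = {m ∈ ℤ : m ≠ n(n+1) ∀ n ∈ ℕ}`, any everywhere-positive function of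
mass `μ` can be strictly improved: there is `w` of mass `μ` with the same
kinetic energy and a strictly larger defect term, hence strictly smaller
energy. -/
theorem stmt7 (q μ : ℝ) (hq : 2 < q) (hq' : q < 4) (hμ : 0 < μ)
    (u u' : ℝ → ℝ) (hu : InH1 u u') (hmass : mass u = μ)
    (hpos : ∀ x : ℝ, 0 < u x) :
    ∃ w w' : ℝ → ℝ, InH1 w w' ∧ mass w = μ ∧
      (∫ x : ℝ, (w' x) ^ 2) = (∫ x : ℝ, (u' x) ^ 2) ∧
      (∑' v : Vgap, |u ((v : ℤ) : ℝ)| ^ q) < (∑' v : Vgap, |w ((v : ℤ) : ℝ)| ^ q) ∧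
      energy q Vgap w w' < energy q Vgap u u' := by
  obtain ⟨h1, h2, hftc⟩ := hu
  rw [show mass u = ∫ x : ℝ, (u x) ^ 2 from rfl] at hmass
  have hsum2 : Summable (fun m : ℤ => (u (m : ℝ)) ^ 2) := summable_sq_of_InH1 u u' h1 h2 hftc
  set g : ℤ → ℝ := fun m => |u (m : ℝ)| ^ q with hg_def
  have hgpos : ∀ m : ℤ, 0 < g m := fun m =>
    Real.rpow_pos_of_pos (abs_pos.mpr (ne_of_gt (hpos _))) q
  have hgsum : Summable g := by
    set M : ℝ := Real.sqrt (∑' m : ℤ, (u (m : ℝ)) ^ 2) with hM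
    have hbd : ∀ m : ℤ, g m ≤ M ^ (q - 2) * (u (m : ℝ)) ^ 2 := by
      intro m
      have hum2 : (u (m : ℝ)) ^ 2 ≤ ∑' m : ℤ, (u (m : ℝ)) ^ 2 :=
        Summable.le_tsum hsum2 m (fun _ _ => sq_nonneg _)
      have humM : u (m : ℝ) ≤ M := by
        have h := Real.sqrt_le_sqrt hum2
        rwa [Real.sqrt_sq (hpos _).le] at h
      have hsplit : g m = (u (m : ℝ)) ^ (q - 2 : ℝ) * (u (m : ℝ)) ^ (2 : ℝ) := by
        show |u (m : ℝ)| ^ q = _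
        rw [abs_of_pos (hpos _), ← Real.rpow_add (hpos _)]
        norm_num
      rw [hsplit, Real.rpow_two]
      have hle : (u (m : ℝ)) ^ (q - 2 : ℝ) ≤ M ^ (q - 2 : ℝ) :=
        Real.rpow_le_rpow (hpos _).le humM (by linarith)
      exact mul_le_mul_of_nonneg_right hle (sq_nonneg _)
    exact Summable.of_nonneg_of_le (fun m => (hgpos m).le) hbd (hsum2.mul_left _)
  set f : ℕ → ℤ := fun n => (n : ℤ) * (n + 1) with hf_def
  have hfinj : Function.Injective f := by
    have hsm : StrictMono f := strictMono_nat_of_lt_succ (fun n => by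
      simp only [hf_def]; push_cast; nlinarith)
    exact hsm.injective
  have hf0 : ∀ n : ℕ, 0 ≤ f n := fun n => by positivity
  have hVc : (Vgap)ᶜ = Set.range f := by
    ext m
    simp only [Vgap, Set.mem_compl_iff, Set.mem_setOf_eq, Set.mem_range, hf_def]
    push_neg
    constructor
    · rintro ⟨n, hn⟩; exact ⟨n, hn.symm⟩
    · rintro ⟨n, hn⟩; exact ⟨n, hn.symm⟩
  have hsa : ∀ k : ℤ, Summable (fun n : ℕ => g (f n + k)) := fun k =>
    hgsum.comp_injective (fun n1 n2 hab => hfinj (add_right_cancel hab))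
  set a : ℤ → ℝ := fun k => ∑' n : ℕ, g (f n + k) with ha_def
  have ha0pos : 0 < a 0 :=
    lt_of_lt_of_le (hgpos (f 0 + 0)) (Summable.le_tsum (hsa 0) 0 (fun _ _ => (hgpos _).le))
  obtain ⟨s, hs⟩ := ((tendsto_tsum_compl_atTop_zero g).eventually_lt_const ha0pos).exists
  obtain ⟨Bd, hBd⟩ := s.bddAbove
  set k : ℤ := Bd + 1 with hk
  have hks : ∀ n : ℕ, f n + k ∉ s := by
    intro n hmem
    have hle : f n + k ≤ Bd := hBd hmem
    have := hf0 n
    omega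
  have hak : a k ≤ ∑' (x : {x : ℤ // x ∉ s}), g ↑x := by
    refine Summable.tsum_le_tsum_of_inj (fun n => (⟨f n + k, hks n⟩ : {x : ℤ // x ∉ s})) ?_
      (fun c _ => (hgpos _).le) (fun n => le_rfl) (hsa k) (hgsum.subtype _)
    intro n1 n2 hab
    have : f n1 + k = f n2 + k := congrArg Subtype.val hab
    exact hfinj (add_right_cancel this)
  have hlt : a k < a 0 := lt_of_le_of_lt hak hs
  -- the sums over Vgap
  have hcompl_sum : ∀ k' : ℤ, (∑' v : ↥((Vgap)ᶜ), g (↑v + k')) = a k' := by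
    intro k'
    rw [hVc]
    have h := (Equiv.ofInjective f hfinj).tsum_eq (fun v : Set.range f => g (↑v + k'))
    simp only [Equiv.ofInjective_apply] at h
    exact h.symm
  have hsplit_u : (∑' v : Vgap, g ↑v) + (∑' v : ↥((Vgap)ᶜ), g ↑v) = ∑' m : ℤ, g m :=
    Summable.tsum_add_tsum_compl (hgsum.subtype _) (hgsum.subtype _)
  have hgk : Summable (fun m : ℤ => g (m + k)) :=
    hgsum.comp_injective (add_left_injective k)
  have hsplit_w : (∑' v : Vgap, g (↑v + k)) + (∑' v : ↥((Vgap)ᶜ), g (↑v + k))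
      = ∑' m : ℤ, g (m + k) :=
    Summable.tsum_add_tsum_compl (hgk.subtype _) (hgk.subtype _)
  have htot : (∑' m : ℤ, g (m + k)) = ∑' m : ℤ, g m := by
    have h := (Equiv.addRight k).tsum_eq g
    simpa using h
  have hc0 : (∑' v : ↥((Vgap)ᶜ), g (↑v)) = a 0 := by
    have h := hcompl_sum 0
    simp only [add_zero] at h
    exact h
  have hkey : (∑' v : Vgap, g ↑v) < ∑' v : Vgap, g (↑v + k) := by
    have e2 := hsplit_w
    rw [htot, hcompl_sum k] at e2
    have e1 := hsplit_u
    rw [hc0] at e1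
    linarith
  -- the translated function
  set w : ℝ → ℝ := fun x => u (x + (k : ℝ)) with hw_def
  set w' : ℝ → ℝ := fun x => u' (x + (k : ℝ)) with hw'_def
  have hw1 : Integrable (fun x => (w x) ^ 2) := by
    have h := ((measurePreserving_add_right (volume : Measure ℝ) (k : ℝ)).integrable_comp
      h1.aestronglyMeasurable).2 h1
    simpa [Function.comp_def] using h
  have hw2 : Integrable (fun x => (w' x) ^ 2) := by
    have h := ((measurePreserving_add_right (volume : Measure ℝ) (k : ℝ)).integrable_comp
      h2.aestronglyMeasurable).2 h2
    simpa [Function.comp_def] using h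
  have hwftc : ∀ a b : ℝ, w b - w a = ∫ x in a..b, w' x := by
    intro a' b'
    rw [hw_def, hw'_def]
    show u (b' + (k:ℝ)) - u (a' + (k:ℝ)) = ∫ x in a'..b', u' (x + (k:ℝ))
    rw [intervalIntegral.integral_comp_add_right (fun t => u' t) (k : ℝ)]
    exact hftc (a' + (k:ℝ)) (b' + (k:ℝ))
  have hmw : mass w = μ := by
    rw [show mass w = ∫ x : ℝ, (u (x + (k:ℝ))) ^ 2 from rfl, ← hmass]
    exact integral_add_right_eq_self (fun y => (u y) ^ 2) (k : ℝ)
  have hkin : (∫ x : ℝ, (w' x) ^ 2) = ∫ x : ℝ, (u' x) ^ 2 :=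
    integral_add_right_eq_self (fun y => (u' y) ^ 2) (k : ℝ)
  have hsum_ult : (∑' v : Vgap, |u ((v : ℤ) : ℝ)| ^ q) < ∑' v : Vgap, |w ((v : ℤ) : ℝ)| ^ q := by
    have hw_sum : (∑' v : Vgap, |w ((v : ℤ) : ℝ)| ^ q) = ∑' v : Vgap, g (↑v + k) := by
      apply tsum_congr
      intro v
      have hcast : (((v : ℤ) : ℝ) + (k : ℝ)) = (((v : ℤ) + k : ℤ) : ℝ) := by push_cast; ring
      show |u (((v : ℤ) : ℝ) + (k : ℝ))| ^ q = |u ((((v : ℤ) + k : ℤ)) : ℝ)| ^ q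
      rw [hcast]
    rw [hw_sum]
    exact hkey
  refine ⟨w, w', ⟨hw1, hw2, hwftc⟩, hmw, hkin, hsum_ult, ?_⟩
  show (1 / 2) * (∫ x : ℝ, (w' x) ^ 2) - (1 / q) * (∑' v : Vgap, |w ((v : ℤ) : ℝ)| ^ q)
      < (1 / 2) * (∫ x : ℝ, (u' x) ^ 2) - (1 / q) * (∑' v : Vgap, |u ((v : ℤ) : ℝ)| ^ q)
  rw [hkin]
  have hq0 : (0:ℝ) < 1 / q := by positivity
  exact sub_lt_sub_left (mul_lt_mul_of_pos_left hsum_ult hq0) _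
end
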